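/- Suppose player i with perceived correlation parameter κ (yielding E_κ[s_{-i}|s_i] = ψ(κ)s_i) observes data generated under true elasticity r° and true correlation κ° (yielding E_{κ°}[s_{-i}|s_i] = ψ(κ°)s_i), with both players using linear strategies α_i, α_{-i} ≥ 0 not both zero. Then the unique elasticity belief r̂ matching the conditional mean of prices for every signal s_i — i.e. solving γ − (1/2)r̂α_i − (1/2)r̂α_{-i}ψ(κ) = γ − (1/2)r°α_i − (1/2)r°α_{-i}ψ(κ°) — is r̂ = r°·(α_i + α_{-i}ψ(κ°))/(α_i + α_{-i}ψ(κ)). Moreover, if α_{-i} > 0 then r̂ is strictly decreasing in ψ(κ), so projection bias (ψ(κ) > ψ(κ°)) yields r̂ < r° and correlation neglect (ψ(κ) < ψ(κ°)) yields r̂ > r°. -/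
import Mathlib


/-- the unique elasticity inference matching conditional price means is
r̂ = r°(α_i + α_{-i}ψ(κ°))/(α_i + α_{-i}ψ(κ)); it is strictly decreasing in the perceived
correlation coefficient ψ(κ), so projection bias yields r̂ < r° and correlation neglect r̂ > r°. -/
theorem elasticity_inference (γ r ψ ψ0 αi αm : ℝ) (hγ : 0 < γ) (hr : 0 < r)
    (hψ : ψ ∈ Set.Ioc (0:ℝ) 1) (hψ0 : ψ0 ∈ Set.Ioc (0:ℝ) 1)
    (hαi : 0 ≤ αi) (hαm : 0 ≤ αm) (hne : αi ≠ 0 ∨ αm ≠ 0) :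
    (∀ rhat : ℝ,
      (γ - (1/2) * rhat * αi - (1/2) * rhat * αm * ψ
        = γ - (1/2) * r * αi - (1/2) * r * αm * ψ0)
      ↔ rhat = r * (αi + αm * ψ0) / (αi + αm * ψ)) ∧
    (0 < αm →
      StrictAntiOn (fun ψv : ℝ => r * (αi + αm * ψ0) / (αi + αm * ψv)) (Set.Ioi 0) ∧
      (ψ0 < ψ → r * (αi + αm * ψ0) / (αi + αm * ψ) < r) ∧
      (ψ < ψ0 → r < r * (αi + αm * ψ0) / (αi + αm * ψ))) := by
  obtain ⟨hψpos, hψle⟩ := hψ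
  obtain ⟨hψ0pos, hψ0le⟩ := hψ0
  have hden : 0 < αi + αm * ψ := by
    rcases hne with h | h
    · have : 0 < αi := lt_of_le_of_ne hαi (Ne.symm h)
      positivity
    · have : 0 < αm := lt_of_le_of_ne hαm (Ne.symm h)
      nlinarith
  have hnum : 0 < αi + αm * ψ0 := by
    rcases hne with h | h
    · have : 0 < αi := lt_of_le_of_ne hαi (Ne.symm h)
      positivity
    · have : 0 < αm := lt_of_le_of_ne hαm (Ne.symm h)
      nlinarith
  constructor
  · intro rhat
    rw [eq_div_iff hden.ne']
    constructor
    · intro h; nlinarith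
    · intro h; nlinarith
  · intro hαmpos
    refine ⟨?_, ?_, ?_⟩
    · intro x hx y hy hxy
      have hdx : 0 < αi + αm * x := by
        have : (0:ℝ) < x := hx
        nlinarith
      have hdy : 0 < αi + αm * y := by
        have : (0:ℝ) < y := hy
        nlinarith
      have hnum' : 0 < r * (αi + αm * ψ0) := by positivity
      exact div_lt_div_of_pos_left hnum' hdx (by nlinarith)
    · intro h
      rw [div_lt_iff₀ hden]
      nlinarith [mul_pos hr hαmpos]
    · intro h
      rw [lt_div_iff₀ hden]
      nlinarith [mul_pos hr hαmpos]
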